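/- In the setting of the Weyl algebra module M₁(λ,μ) with λ ≠ 0, define φ(n) = −2 Σ_k a*(k)a(n−k) for n ≠ 0 and φ(0) = −2(Σ_{k≤−1} a(k)a*(−k) + Σ_{k≥0} a*(−k)a(k)) (these sums act locally finitely on M₁(λ,μ)). Then [φ(n), φ(m)] = −4n δ_{n+m,0} and [φ(n), a(m)] = 2a(n+m) as operators on M₁(λ,μ). -/

import Mathlib

/-- A partition with positive parts, written as a decreasing list. -/
def PartitionList : Type := {l : List ℕ // l.Pairwise (· ≥ ·) ∧ ∀ x ∈ l, 1 ≤ x}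

open Finset

private lemma stmt13.sumIoc {V : Type*} [AddCommGroup V] (g : ℤ → V) {a b c : ℤ}
    (hab : a ≤ b) (hbc : b ≤ c) :
    ∑ j ∈ Ioc a b, g j + ∑ j ∈ Ioc b c, g j = ∑ j ∈ Ioc a c, g j := by
  rw [← Ioc_union_Ioc_eq_Ioc hab hbc, Finset.sum_union]
  exact Finset.disjoint_left.2 fun x hx hx' =>
    absurd (mem_Ioc.1 hx).2 (not_le.2 (mem_Ioc.1 hx').1)

private lemma stmt13.iccIoc (a b : ℤ) : Icc a b = Ioc (a - 1) b := by
  ext x; simp only [mem_Icc, mem_Ioc]; omega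

private lemma stmt13.constSum {V : Type*} [AddCommGroup V] (c : V) (a b : ℤ) (hab : a ≤ b) :
    ∑ _j ∈ Ioc a b, c = (b - a) • c := by
  rw [Finset.sum_const, Int.card_Ioc, ← natCast_zsmul, Int.toNat_of_nonneg (by omega)]

private lemma stmt13.shiftDiff {V : Type*} [AddCommGroup V]
    (g : ℤ → V) (c : V) (N0 : ℕ)
    (htop : ∀ j : ℤ, (N0 : ℤ) < j → g j = -c)
    (hbot : ∀ j : ℤ, j < -(N0 : ℤ) → g j = 0)
    (n : ℤ) (M : ℕ) (hM : (N0 : ℤ) + |n| ≤ (M : ℤ)) :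
    ∑ j ∈ Icc (n - (M : ℤ)) (n + (M : ℤ)), g j - ∑ j ∈ Icc (-(M : ℤ)) (M : ℤ), g j
      = -(n • c) := by
  have habs := abs_nonneg n
  have h1 : |n| = n ∨ |n| = -n := abs_choice n
  rcases le_or_gt n 0 with hneg | hpos
  · have hn' : (N0 : ℤ) - n ≤ M := by rcases h1 with h | h <;> omega
    rw [stmt13.iccIoc, stmt13.iccIoc,
      ← stmt13.sumIoc g (by omega : n - (M:ℤ) - 1 ≤ -(M:ℤ) - 1)
        (by omega : -(M:ℤ) - 1 ≤ n + (M:ℤ)),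
      ← stmt13.sumIoc g (by omega : -(M:ℤ) - 1 ≤ n + (M:ℤ)) (by omega : n + (M:ℤ) ≤ (M:ℤ))]
    have e1 : ∑ j ∈ Ioc (n - (M:ℤ) - 1) (-(M:ℤ) - 1), g j = 0 :=
      Finset.sum_eq_zero fun j hj => hbot j (by have := (mem_Ioc.1 hj).2; omega)
    have e2 : ∑ j ∈ Ioc (n + (M:ℤ)) (M:ℤ), g j = n • c := by
      rw [Finset.sum_congr rfl (fun j hj => htop j (by have := (mem_Ioc.1 hj).1; omega)),
        stmt13.constSum (-c) _ _ (by omega), smul_neg,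
        show (M:ℤ) - (n + (M:ℤ)) = -n from by ring, neg_smul, neg_neg]
    rw [e1, e2]; abel
  · have hn' : (N0 : ℤ) + n ≤ M := by rcases h1 with h | h <;> omega
    rw [stmt13.iccIoc, stmt13.iccIoc,
      ← stmt13.sumIoc g (by omega : n - (M:ℤ) - 1 ≤ (M:ℤ)) (by omega : (M:ℤ) ≤ n + (M:ℤ)),
      ← stmt13.sumIoc g (by omega : -(M:ℤ) - 1 ≤ n - (M:ℤ) - 1)
        (by omega : n - (M:ℤ) - 1 ≤ (M:ℤ))]
    have e1 : ∑ j ∈ Ioc (-(M:ℤ) - 1) (n - (M:ℤ) - 1), g j = 0 :=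
      Finset.sum_eq_zero fun j hj => hbot j (by have := (mem_Ioc.1 hj).2; omega)
    have e2 : ∑ j ∈ Ioc ((M:ℤ)) (n + (M:ℤ)), g j = -(n • c) := by
      rw [Finset.sum_congr rfl (fun j hj => htop j (by have := (mem_Ioc.1 hj).1; omega)),
        stmt13.constSum (-c) _ _ (by omega), smul_neg,
        show n + (M:ℤ) - (M:ℤ) = n from by ring]
    rw [e1, e2]; abel

theorem stmt13 (lam mu : ℂ) (hlam : lam ≠ 0)
    {V : Type*} [AddCommGroup V] [Module ℂ V]
    (A A' : ℤ → Module.End ℂ V) (v₁ : V)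
    -- Weyl algebra relations
    (hAA' : ∀ n m : ℤ, A n * A' m - A' m * A n = if n + m = 0 then 1 else 0)
    (hAA : ∀ n m : ℤ, A n * A m = A m * A n)
    (hA'A' : ∀ n m : ℤ, A' n * A' m = A' m * A' n)
    -- Whittaker generator of M₁(λ,μ)
    (hA0 : A 0 v₁ = lam • v₁) (hAn : ∀ n : ℤ, 1 ≤ n → A n v₁ = 0)
    (hA'1 : A' 1 v₁ = mu • v₁) (hA'm : ∀ m : ℤ, 2 ≤ m → A' m v₁ = 0)
    -- PBW basis of M₁(λ,μ)
    (hbasis_li : LinearIndependent ℂ (fun st : PartitionList × PartitionList =>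
      (((st.1.1.map fun k => A (-(k : ℤ))).prod *
        (st.2.1.map fun k => A' (1 - (k : ℤ))).prod) v₁)))
    (hbasis_span : Submodule.span ℂ (Set.range (fun st : PartitionList × PartitionList =>
      (((st.1.1.map fun k => A (-(k : ℤ))).prod *
        (st.2.1.map fun k => A' (1 - (k : ℤ))).prod) v₁))) = ⊤)
    -- the normally ordered quadratic operators φ(n), defined by locally finite sums
    (Φ : ℤ → Module.End ℂ V)
    (hΦ : ∀ n : ℤ, n ≠ 0 → ∀ w : V, ∃ N : ℕ, ∀ F : Finset ℤ,
      Finset.Icc (-(N : ℤ)) (N : ℤ) ⊆ F →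
        Φ n w = (-2 : ℂ) • ∑ k ∈ F, A' k (A (n - k) w))
    (hΦ0 : ∀ w : V, ∃ N : ℕ, ∀ F : Finset ℤ,
      Finset.Icc (-(N : ℤ)) (N : ℤ) ⊆ F →
        Φ 0 w = (-2 : ℂ) •
          ((∑ k ∈ F.filter (fun k => k ≤ -1), A k (A' (-k) w)) +
            ∑ k ∈ F.filter (fun k => 0 ≤ k), A' (-k) (A k w))) :
    (∀ n m : ℤ, Φ n * Φ m - Φ m * Φ n =
        if n + m = 0 then ((-4 * n : ℤ) : ℂ) • (1 : Module.End ℂ V) else 0) ∧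
    (∀ n m : ℤ, Φ n * A m - A m * Φ n = (2 : ℂ) • A (n + m)) := by
  classical
  -- pointwise Weyl relations
  have pAA' : ∀ n m : ℤ, ∀ w : V,
      A n (A' m w) = A' m (A n w) + (if n + m = 0 then w else 0) := by
    intro n m w
    have h := LinearMap.congr_fun (hAA' n m) w
    simp only [LinearMap.sub_apply, Module.End.mul_apply] at h
    by_cases hc : n + m = 0
    · rw [if_pos hc] at h ⊢
      rw [Module.End.one_apply] at h
      exact sub_eq_iff_eq_add'.mp h
    · rw [if_neg hc] at h ⊢
      rw [LinearMap.zero_apply] at h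
      rw [add_zero]
      exact sub_eq_zero.mp h
  have pAA : ∀ n m : ℤ, ∀ w : V, A n (A m w) = A m (A n w) := by
    intro n m w
    have h := LinearMap.congr_fun (hAA n m) w
    simpa only [Module.End.mul_apply] using h
  have pA'A' : ∀ n m : ℤ, ∀ w : V, A' n (A' m w) = A' m (A' n w) := by
    intro n m w
    have h := LinearMap.congr_fun (hA'A' n m) w
    simpa only [Module.End.mul_apply] using h
  -- extraction of vanishing terms from local finiteness
  have hvanish : ∀ n : ℤ, n ≠ 0 → ∀ w : V, ∃ N : ℕ,
      (∀ F : Finset ℤ, Finset.Icc (-(N : ℤ)) (N : ℤ) ⊆ F →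
        Φ n w = (-2 : ℂ) • ∑ k ∈ F, A' k (A (n - k) w)) ∧
      ∀ k : ℤ, k ∉ Finset.Icc (-(N : ℤ)) (N : ℤ) → A' k (A (n - k) w) = 0 := by
    intro n hn w
    obtain ⟨N, hN⟩ := hΦ n hn w
    refine ⟨N, hN, fun k hk => ?_⟩
    have h1 := hN (Finset.Icc (-(N : ℤ)) N) subset_rfl
    have h2 := hN (insert k (Finset.Icc (-(N : ℤ)) N)) (Finset.subset_insert _ _)
    rw [Finset.sum_insert hk, smul_add] at h2
    have h3 : (-2 : ℂ) • A' k (A (n - k) w) = 0 := right_eq_add.mp (h1.symm.trans h2)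
    exact (smul_eq_zero.mp h3).resolve_left (by norm_num)
  have hvanish0 : ∀ w : V, ∃ N : ℕ,
      (∀ F : Finset ℤ, Finset.Icc (-(N : ℤ)) (N : ℤ) ⊆ F →
        Φ 0 w = (-2 : ℂ) •
          ((∑ k ∈ F.filter (fun k => k ≤ -1), A k (A' (-k) w)) +
            ∑ k ∈ F.filter (fun k => 0 ≤ k), A' (-k) (A k w))) ∧
      (∀ k : ℤ, k < -(N : ℤ) → A k (A' (-k) w) = 0) ∧
      (∀ k : ℤ, (N : ℤ) < k → A' (-k) (A k w) = 0) := by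
    intro w
    obtain ⟨N, hN⟩ := hΦ0 w
    refine ⟨N, hN, fun k hk => ?_, fun k hk => ?_⟩
    · have hknot : k ∉ Finset.Icc (-(N : ℤ)) (N : ℤ) := by
        simp only [Finset.mem_Icc]; omega
      have h1 := hN (Finset.Icc (-(N : ℤ)) N) subset_rfl
      have h2 := hN (insert k (Finset.Icc (-(N : ℤ)) N)) (Finset.subset_insert _ _)
      rw [Finset.filter_insert, Finset.filter_insert, if_pos (by omega : k ≤ -1),
        if_neg (by omega : ¬ (0 : ℤ) ≤ k),
        Finset.sum_insert (by simp only [Finset.mem_filter]; exact fun h => hknot h.1),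
        add_assoc, smul_add] at h2
      have h3 : (-2 : ℂ) • A k (A' (-k) w) = 0 := right_eq_add.mp (h1.symm.trans h2)
      exact (smul_eq_zero.mp h3).resolve_left (by norm_num)
    · have hknot : k ∉ Finset.Icc (-(N : ℤ)) (N : ℤ) := by
        simp only [Finset.mem_Icc]; omega
      have h1 := hN (Finset.Icc (-(N : ℤ)) N) subset_rfl
      have h2 := hN (insert k (Finset.Icc (-(N : ℤ)) N)) (Finset.subset_insert _ _)
      rw [Finset.filter_insert, Finset.filter_insert, if_neg (by omega : ¬ k ≤ -1),
        if_pos (by omega : (0 : ℤ) ≤ k),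
        Finset.sum_insert (by simp only [Finset.mem_filter]; exact fun h => hknot h.1),
        add_left_comm, smul_add] at h2
      have h3 : (-2 : ℂ) • A' (-k) (A k w) = 0 := right_eq_add.mp (h1.symm.trans h2)
      exact (smul_eq_zero.mp h3).resolve_left (by norm_num)
  -- diagonal values
  have hdiag : ∀ w : V, ∃ N : ℕ,
      (∀ k : ℤ, (N : ℤ) < k → A' k (A (-k) w) = -w) ∧
      (∀ k : ℤ, k < -(N : ℤ) → A' k (A (-k) w) = 0) := by
    intro w
    obtain ⟨N, _, hb, ht⟩ := hvanish0 w
    refine ⟨N, fun k hk => ?_, fun k hk => ?_⟩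
    · have h1 := pAA' (-k) k w
      rw [if_pos (by ring : -k + k = 0)] at h1
      have h2 := hb (-k) (by omega)
      rw [neg_neg] at h2
      rw [h2] at h1
      exact (eq_neg_of_add_eq_zero_left h1.symm)
    · have := ht (-k) (by omega)
      rwa [neg_neg] at this
  -- subset helper
  have subIcc : ∀ a b : ℕ, a ≤ b →
      Finset.Icc (-(a : ℤ)) (a : ℤ) ⊆ Finset.Icc (-(b : ℤ)) (b : ℤ) := fun a b h =>
    Finset.Icc_subset_Icc (by omega) (by omega)
  -- commutator with A
  have lemA : ∀ n m : ℤ, ∀ w : V,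
      Φ n (A m w) - A m (Φ n w) = (2 : ℂ) • A (n + m) w := by
    intro n m w
    by_cases hn : n = 0
    · subst hn
      obtain ⟨N1, hF1, -, -⟩ := hvanish0 (A m w)
      obtain ⟨N2, hF2, -, -⟩ := hvanish0 w
      set M : ℕ := N1 + N2 + m.natAbs + 1 with hMdef
      set F : Finset ℤ := Finset.Icc (-(M : ℤ)) (M : ℤ) with hFdef
      rw [hF1 F (subIcc _ _ (by omega)), hF2 F (subIcc _ _ (by omega)),
        map_smul, map_add, map_sum, map_sum, ← smul_sub, add_sub_add_comm,
        ← Finset.sum_sub_distrib, ← Finset.sum_sub_distrib]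
      have t1 : ∀ k ∈ F.filter (fun k => k ≤ -1),
          A k (A' (-k) (A m w)) - A m (A k (A' (-k) w))
            = -(if k = m then A m w else 0) := by
        intro k _
        rw [pAA m k (A' (-k) w), pAA' m (-k) w]
        rw [map_add]
        by_cases hk : k = m
        · subst hk
          rw [if_pos (by ring : k + -k = 0), if_pos rfl]
          abel
        · rw [if_neg (by omega : ¬ m + -k = 0), if_neg hk, map_zero, add_zero, neg_zero,
            sub_self]
      have t2 : ∀ k ∈ F.filter (fun k => 0 ≤ k),
          A' (-k) (A k (A m w)) - A m (A' (-k) (A k w))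
            = -(if k = m then A m w else 0) := by
        intro k _
        rw [pAA k m w, pAA' m (-k) (A k w)]
        by_cases hk : k = m
        · subst hk
          rw [if_pos (by ring : k + -k = 0), if_pos rfl]
          abel
        · rw [if_neg (by omega : ¬ m + -k = 0), if_neg hk, add_zero, neg_zero, sub_self]
      rw [Finset.sum_congr rfl t1, Finset.sum_congr rfl t2,
        Finset.sum_neg_distrib, Finset.sum_neg_distrib,
        Finset.sum_ite_eq', Finset.sum_ite_eq']
      have hmF : m ∈ F := by
        rw [hFdef]; simp only [Finset.mem_Icc]; omega
      by_cases hm1 : m ≤ -1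
      · rw [if_pos (by simp only [Finset.mem_filter]; exact ⟨hmF, hm1⟩),
          if_neg (by simp only [Finset.mem_filter]; exact fun h => by omega)]
        rw [neg_zero, add_zero, zero_add]
        rw [smul_neg, ← neg_smul]
        norm_num
      · rw [if_neg (by simp only [Finset.mem_filter]; exact fun h => hm1 h.2),
          if_pos (by simp only [Finset.mem_filter]; exact ⟨hmF, by omega⟩)]
        rw [neg_zero, zero_add, zero_add]
        rw [smul_neg, ← neg_smul]
        norm_num
    · obtain ⟨N1, hF1, -⟩ := hvanish n hn (A m w)
      obtain ⟨N2, hF2, -⟩ := hvanish n hn w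
      set M : ℕ := N1 + N2 + m.natAbs + 1 with hMdef
      set F : Finset ℤ := Finset.Icc (-(M : ℤ)) (M : ℤ) with hFdef
      rw [hF1 F (subIcc _ _ (by omega)), hF2 F (subIcc _ _ (by omega)),
        map_smul, map_sum, ← smul_sub, ← Finset.sum_sub_distrib]
      have t1 : ∀ k ∈ F,
          A' k (A (n - k) (A m w)) - A m (A' k (A (n - k) w))
            = -(if k = -m then A (n + m) w else 0) := by
        intro k _
        rw [pAA (n - k) m w, pAA' m k (A (n - k) w)]
        by_cases hk : k = -m
        · subst hk
          rw [if_pos (by ring : m + -m = 0), if_pos rfl,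
            show n - -m = n + m from by ring]
          abel
        · rw [if_neg (by omega : ¬ m + k = 0), if_neg hk, add_zero, neg_zero, sub_self]
      rw [Finset.sum_congr rfl t1, Finset.sum_neg_distrib, Finset.sum_ite_eq',
        if_pos (by rw [hFdef]; simp only [Finset.mem_Icc]; omega),
        smul_neg, ← neg_smul]
      norm_num
  -- commutator with A'
  have lemB : ∀ n m : ℤ, ∀ w : V,
      Φ n (A' m w) - A' m (Φ n w) = (-2 : ℂ) • A' (n + m) w := by
    intro n m w
    by_cases hn : n = 0
    · subst hn
      obtain ⟨N1, hF1, -, -⟩ := hvanish0 (A' m w)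
      obtain ⟨N2, hF2, -, -⟩ := hvanish0 w
      set M : ℕ := N1 + N2 + m.natAbs + 1 with hMdef
      set F : Finset ℤ := Finset.Icc (-(M : ℤ)) (M : ℤ) with hFdef
      rw [hF1 F (subIcc _ _ (by omega)), hF2 F (subIcc _ _ (by omega)),
        map_smul, map_add, map_sum, map_sum, ← smul_sub, add_sub_add_comm,
        ← Finset.sum_sub_distrib, ← Finset.sum_sub_distrib]
      have t1 : ∀ k ∈ F.filter (fun k => k ≤ -1),
          A k (A' (-k) (A' m w)) - A' m (A k (A' (-k) w))
            = (if k = -m then A' m w else 0) := by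
        intro k _
        rw [pA'A' (-k) m w, pAA' k m (A' (-k) w)]
        by_cases hk : k = -m
        · subst hk
          rw [if_pos (by ring : -m + m = 0), if_pos rfl,
            show -(-m) = m from neg_neg m]
          abel
        · rw [if_neg (by omega : ¬ k + m = 0), if_neg hk, add_zero, sub_self]
      have t2 : ∀ k ∈ F.filter (fun k => 0 ≤ k),
          A' (-k) (A k (A' m w)) - A' m (A' (-k) (A k w))
            = (if k = -m then A' m w else 0) := by
        intro k _
        rw [pAA' k m w, map_add, pA'A' (-k) m (A k w)]
        by_cases hk : k = -m
        · subst hk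
          rw [if_pos (by ring : -m + m = 0), if_pos rfl,
            show -(-m) = m from neg_neg m]
          abel
        · rw [if_neg (by omega : ¬ k + m = 0), if_neg hk, map_zero, add_zero, sub_self]
      rw [Finset.sum_congr rfl t1, Finset.sum_congr rfl t2,
        Finset.sum_ite_eq', Finset.sum_ite_eq']
      have hmF : -m ∈ F := by
        rw [hFdef]; simp only [Finset.mem_Icc]; omega
      by_cases hm1 : 1 ≤ m
      · rw [if_pos (by simp only [Finset.mem_filter]; exact ⟨hmF, by omega⟩),
          if_neg (by simp only [Finset.mem_filter]; exact fun h => by omega),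
          add_zero, zero_add]
      · rw [if_neg (by simp only [Finset.mem_filter]; exact fun h => by omega),
          if_pos (by simp only [Finset.mem_filter]; exact ⟨hmF, by omega⟩),
          zero_add, zero_add]
    · obtain ⟨N1, hF1, -⟩ := hvanish n hn (A' m w)
      obtain ⟨N2, hF2, -⟩ := hvanish n hn w
      set M : ℕ := N1 + N2 + n.natAbs + m.natAbs + 1 with hMdef
      set F : Finset ℤ := Finset.Icc (-(M : ℤ)) (M : ℤ) with hFdef
      rw [hF1 F (subIcc _ _ (by omega)), hF2 F (subIcc _ _ (by omega)),
        map_smul, map_sum, ← smul_sub, ← Finset.sum_sub_distrib]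
      have t1 : ∀ k ∈ F,
          A' k (A (n - k) (A' m w)) - A' m (A' k (A (n - k) w))
            = (if k = n + m then A' (n + m) w else 0) := by
        intro k _
        rw [pAA' (n - k) m w, map_add, pA'A' k m (A (n - k) w)]
        by_cases hk : k = n + m
        · subst hk
          rw [if_pos (by ring : n - (n + m) + m = 0), if_pos rfl]
          abel
        · rw [if_neg (by omega : ¬ n - k + m = 0), if_neg hk, map_zero, add_zero, sub_self]
      rw [Finset.sum_congr rfl t1, Finset.sum_ite_eq',
        if_pos (by rw [hFdef]; simp only [Finset.mem_Icc]; omega)]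
  -- main commutator computation (m ≠ 0)
  have main : ∀ n m : ℤ, m ≠ 0 → ∀ w : V,
      Φ n (Φ m w) - Φ m (Φ n w)
        = if n + m = 0 then ((-4 * n : ℤ) : ℂ) • w else 0 := by
    intro n m hm w
    obtain ⟨N1, hF1, -⟩ := hvanish m hm w
    obtain ⟨N2, hF2, -⟩ := hvanish m hm (Φ n w)
    have expand : ∀ M : ℕ, N1 ≤ M → N2 ≤ M →
        Φ n (Φ m w) - Φ m (Φ n w)
          = (4 : ℂ) • (∑ j ∈ Finset.Icc (n - (M : ℤ)) (n + (M : ℤ)),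
                A' j (A (n + m - j) w)
              - ∑ j ∈ Finset.Icc (-(M : ℤ)) (M : ℤ), A' j (A (n + m - j) w)) := by
      intro M h1 h2
      rw [hF1 _ (subIcc _ _ h1), hF2 _ (subIcc _ _ h2),
        map_smul, map_sum, ← smul_sub, ← Finset.sum_sub_distrib]
      have term : ∀ k ∈ Finset.Icc (-(M : ℤ)) (M : ℤ),
          Φ n (A' k (A (m - k) w)) - A' k (A (m - k) (Φ n w))
            = (2 : ℂ) • A' k (A (n + m - k) w) - (2 : ℂ) • A' (n + k) (A (m - k) w) := by
        intro k _
        have b1 : Φ n (A' k (A (m - k) w))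
            = A' k (Φ n (A (m - k) w)) + (-2 : ℂ) • A' (n + k) (A (m - k) w) :=
          sub_eq_iff_eq_add'.mp (lemB n k (A (m - k) w))
        have b2 : Φ n (A (m - k) w)
            = A (m - k) (Φ n w) + (2 : ℂ) • A (n + (m - k)) w :=
          sub_eq_iff_eq_add'.mp (lemA n (m - k) w)
        rw [b1, b2, map_add, map_smul, show n + (m - k) = n + m - k from by ring,
          neg_smul]
        abel
      have e := Finset.sum_congr rfl term
      rw [e, Finset.sum_sub_distrib, ← Finset.smul_sum, ← Finset.smul_sum]
      have reindex : ∑ k ∈ Finset.Icc (-(M : ℤ)) (M : ℤ), A' (n + k) (A (m - k) w)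
          = ∑ j ∈ Finset.Icc (n - (M : ℤ)) (n + (M : ℤ)), A' j (A (n + m - j) w) := by
        rw [show n - (M : ℤ) = n + -(M : ℤ) from by ring, ← Finset.map_add_left_Icc,
          Finset.sum_map]
        refine Finset.sum_congr rfl fun k _ => ?_
        rw [addLeftEmbedding_apply, show n + m - (n + k) = m - k from by ring]
      rw [reindex]
      module
    by_cases hnm : n + m = 0
    · rw [if_pos hnm]
      obtain ⟨N0, hd1, hd2⟩ := hdiag w
      set M : ℕ := N0 + N1 + N2 + n.natAbs + 1 with hMdef
      rw [expand M (by omega) (by omega)]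
      have hs := stmt13.shiftDiff (fun j => A' j (A (n + m - j) w)) w N0
        (fun j hj => by
          simp only [show n + m - j = -j from by omega]
          exact hd1 j hj)
        (fun j hj => by
          simp only [show n + m - j = -j from by omega]
          exact hd2 j hj)
        n M (by
          rcases abs_choice n with h | h <;> omega)
      rw [hs, ← Int.cast_smul_eq_zsmul ℂ, smul_neg, ← neg_smul, smul_smul]
      push_cast
      ring_nf
    · rw [if_neg hnm]
      obtain ⟨N3, -, hv3⟩ := hvanish (n + m) hnm w
      set M : ℕ := N1 + N2 + N3 + n.natAbs + 1 with hMdef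
      rw [expand M (by omega) (by omega)]
      have habs := abs_choice n
      have e1 : ∑ j ∈ Finset.Icc (-(N3 : ℤ)) (N3 : ℤ), A' j (A (n + m - j) w)
          = ∑ j ∈ Finset.Icc (n - (M : ℤ)) (n + (M : ℤ)), A' j (A (n + m - j) w) :=
        Finset.sum_subset
          (Finset.Icc_subset_Icc (by rcases habs with h | h <;> omega)
            (by rcases habs with h | h <;> omega))
          (fun x _ hx => hv3 x (by simp only [Finset.mem_Icc] at hx ⊢; omega))
      have e2 : ∑ j ∈ Finset.Icc (-(N3 : ℤ)) (N3 : ℤ), A' j (A (n + m - j) w)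
          = ∑ j ∈ Finset.Icc (-(M : ℤ)) (M : ℤ), A' j (A (n + m - j) w) :=
        Finset.sum_subset (subIcc _ _ (by omega))
          (fun x _ hx => hv3 x (by simp only [Finset.mem_Icc] at hx ⊢; omega))
      rw [← e1, ← e2, sub_self, smul_zero]
  -- assemble
  refine ⟨fun n m => ?_, fun n m => ?_⟩
  · by_cases hm : m = 0
    · subst hm
      by_cases hn : n = 0
      · subst hn
        simp
      · rw [if_neg (by omega)]
        ext w
        simp only [LinearMap.sub_apply, Module.End.mul_apply, LinearMap.zero_apply]
        have h := main 0 n hn w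
        rw [if_neg (by omega)] at h
        have := sub_eq_zero.mp h
        rw [this, sub_self]
    · ext w
      simp only [LinearMap.sub_apply, Module.End.mul_apply]
      rw [main n m hm w, apply_ite (fun f : Module.End ℂ V => f w), LinearMap.smul_apply,
        Module.End.one_apply, LinearMap.zero_apply]
  · ext w
    simp only [LinearMap.sub_apply, Module.End.mul_apply, LinearMap.smul_apply]
    exact lemA n m w
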